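/- Let N ≥ 1, p ≥ 1, let τ : Fin N → ℝ be delays, Υ a p × p complex matrix, W : Fin N → ℝ → Matrix (Fin p) (Fin p) ℂ, and C the N × N cyclic shift matrix. Suppose Y : ℝ → (Fin N × Fin p → ℂ) is differentiable and satisfies the full network variational system deriv Y t = -((1 : Matrix (Fin N) (Fin N) ℂ) ⊗ₖ Υ).mulVec (Y t) + ∑_{k=0}^{N-1} ((C ^ k) ⊗ₖ (Υ * W k t)).mulVec (Y (t - τ k)) for all t. Then for every q ∈ {0, …, N-1}, with ω_q = Complex.exp (2 * π * Complex.I * q / N), the projected perturbation ξ_q : ℝ → (Fin p → ℂ) defined by ξ_q t a = ∑_{j=0}^{N-1} ω_q ^ (-(j : ℤ)) * Y t (j, a) satisfies the decoupled block equation deriv (ξ_q) t = Υ.mulVec (-(ξ_q t) + ∑_{k=0}^{N-1} ω_q ^ k • ((W k t).mulVec (ξ_q (t - τ k)))) for all t. Thus the 2N-dimensional linearized network dynamics decouples into N independent p-dimensional blocks indexed by the network modes q. -/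

import Mathlib

open Matrix Kronecker


/-- Kronecker mulVec projected against a left vector. -/
lemma kron_proj {N p : ℕ} (A : Matrix (Fin N) (Fin N) ℂ) (B : Matrix (Fin p) (Fin p) ℂ)
    (u : Fin N × Fin p → ℂ) (v : Fin N → ℂ) (a : Fin p) :
    ∑ j : Fin N, v j * ((A ⊗ₖ B) *ᵥ u) (j, a)
      = ∑ b : Fin p, B a b * ∑ j' : Fin N, (v ᵥ* A) j' * u (j', b) := by
  simp only [Matrix.mulVec, Matrix.vecMul, dotProduct, kroneckerMap_apply,
    Fintype.sum_prod_type, Finset.mul_sum, Finset.sum_mul]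
  rw [Finset.sum_comm]
  conv_rhs => rw [Finset.sum_comm]
  refine Finset.sum_congr rfl fun j' _ => ?_
  rw [Finset.sum_comm]
  exact Finset.sum_congr rfl fun b _ => Finset.sum_congr rfl fun j _ => by ring

/-- The mode vector is a left eigenvector of the cyclic shift. -/
lemma mode_vecMul_shift {N : ℕ} (hN : 1 ≤ N) (C : Matrix (Fin N) (Fin N) ℂ)
    (hC : ∀ i j : Fin N, C i j = if (j : ℕ) % N = ((i : ℕ) + 1) % N then 1 else 0)
    (ω : ℂ) (hω0 : ω ≠ 0) (hωN : ω ^ N = 1) :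
    (fun j : Fin N => ω ^ (-(j : ℤ))) ᵥ* C = ω • fun j : Fin N => ω ^ (-(j : ℤ)) := by
  haveI : NeZero N := ⟨by omega⟩
  funext j'
  have hval : ∀ j : Fin N, ((j + 1 : Fin N) : ℕ) = ((j : ℕ) + 1) % N := by
    intro j
    rw [Fin.add_def, Fin.val_one']
    conv_rhs => rw [Nat.add_mod, Nat.mod_eq_of_lt j.isLt]
  have hcond : ∀ j : Fin N, ((j' : ℕ) % N = ((j : ℕ) + 1) % N) ↔ j = j' - 1 := by
    intro j
    rw [Nat.mod_eq_of_lt j'.isLt, ← hval j]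
    constructor
    · intro h
      have : j' = j + 1 := Fin.ext h
      exact (eq_sub_iff_add_eq.mpr this.symm)
    · intro h
      subst h
      rw [sub_add_cancel]
  have hsum : ((fun j : Fin N => ω ^ (-(j : ℤ))) ᵥ* C) j'
      = ω ^ (-(((j' - 1 : Fin N) : ℕ) : ℤ)) := by
    simp only [Matrix.vecMul, dotProduct, hC]
    calc ∑ j : Fin N, ω ^ (-(j : ℤ)) * (if (j' : ℕ) % N = ((j : ℕ) + 1) % N then 1 else 0)
        = ∑ j : Fin N, (if j = j' - 1 then ω ^ (-(j : ℤ)) else 0) := by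
          refine Finset.sum_congr rfl fun j _ => ?_
          by_cases h : j = j' - 1
          · rw [if_pos h, if_pos ((hcond j).mpr h), mul_one]
          · rw [if_neg h, if_neg (fun hc => h ((hcond j).mp hc)), mul_zero]
      _ = ω ^ (-(((j' - 1 : Fin N) : ℕ) : ℤ)) := by
          rw [Finset.sum_ite_eq', if_pos (Finset.mem_univ _)]
  rw [hsum]
  -- relation between the values
  set a : ℕ := ((j' - 1 : Fin N) : ℕ) with ha
  have hab : (a + 1) % N = (j' : ℕ) := by
    have := hval (j' - 1)
    rw [sub_add_cancel] at this
    exact this.symm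
  have haN : a < N := (j' - 1 : Fin N).isLt
  show ω ^ (-(a : ℤ)) = ω * ω ^ (-((j' : ℕ) : ℤ))
  rcases lt_or_ge (a + 1) N with h | h
  · rw [Nat.mod_eq_of_lt h] at hab
    rw [← hab]
    push_cast
    rw [neg_add, zpow_add₀ hω0]
    field_simp
  · have hN' : a + 1 = N := by omega
    have hj0 : (j' : ℕ) = 0 := by rw [← hab, ← hN', Nat.mod_self]
    have h1 : ω ^ ((a : ℤ) + 1) = 1 := by
      have : ((a : ℤ) + 1) = ((N : ℕ) : ℤ) := by exact_mod_cast congrArg (Nat.cast (R := ℤ)) hN'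
      rw [this, zpow_natCast, hωN]
    have h2 : ω ^ (-(a : ℤ)) * ω ^ ((a : ℤ) + 1) = ω := by
      rw [← zpow_add₀ hω0]
      ring_nf
      rw [zpow_one]
    rw [h1, mul_one] at h2
    simp only [hj0, Nat.cast_zero, neg_zero, zpow_zero, mul_one]
    exact h2

/-- The mode vector is a left eigenvector of powers of the cyclic shift. -/
lemma mode_vecMul_shift_pow {N : ℕ} (hN : 1 ≤ N) (C : Matrix (Fin N) (Fin N) ℂ)
    (hC : ∀ i j : Fin N, C i j = if (j : ℕ) % N = ((i : ℕ) + 1) % N then 1 else 0)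
    (ω : ℂ) (hω0 : ω ≠ 0) (hωN : ω ^ N = 1) (k : ℕ) :
    (fun j : Fin N => ω ^ (-(j : ℤ))) ᵥ* (C ^ k) = ω ^ k • fun j : Fin N => ω ^ (-(j : ℤ)) := by
  induction k with
  | zero => simp [Matrix.vecMul_one]
  | succ k ih =>
      rw [pow_succ, ← Matrix.vecMul_vecMul, ih, Matrix.smul_vecMul,
        mode_vecMul_shift hN C hC ω hω0 hωN, smul_smul, pow_succ]


/-- Diagonalization of the linearized delayed ring network: if `Y` solves the
full network variational system
`Y'(t) = -(I_N ⊗ Υ) Y(t) + ∑_k (C^k ⊗ Υ W_k(t)) Y(t - τ_k)`,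
then for every mode `q` the projected perturbation
`ξ_q(t)_a = ∑_j ω_q^{-j} Y(t)_{(j,a)}` (with `ω_q = exp(2πi q/N)`) satisfies
the decoupled `p`-dimensional block equation
`ξ_q'(t) = Υ[-ξ_q(t) + ∑_k ω_q^k W_k(t) ξ_q(t - τ_k)]`. -/
theorem network_variational_decoupling
    (N p : ℕ) (hN : 1 ≤ N) (hp : 1 ≤ p)
    (τ : Fin N → ℝ) (Υ : Matrix (Fin p) (Fin p) ℂ)
    (W : Fin N → ℝ → Matrix (Fin p) (Fin p) ℂ)
    (C : Matrix (Fin N) (Fin N) ℂ)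
    (hC : ∀ i j : Fin N, C i j = if (j : ℕ) % N = ((i : ℕ) + 1) % N then 1 else 0)
    (Y : ℝ → (Fin N × Fin p → ℂ)) (hYdiff : Differentiable ℝ Y)
    (hY : ∀ t : ℝ, deriv Y t
        = -((1 : Matrix (Fin N) (Fin N) ℂ) ⊗ₖ Υ).mulVec (Y t)
          + ∑ k : Fin N, ((C ^ (k : ℕ)) ⊗ₖ (Υ * W k t)).mulVec (Y (t - τ k))) :
    ∀ (q : Fin N) (ω : ℂ),
      ω = Complex.exp (2 * (Real.pi : ℂ) * Complex.I * (q : ℕ) / (N : ℂ)) →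
      ∀ ξ : ℝ → (Fin p → ℂ),
        (∀ t : ℝ, ∀ a : Fin p, ξ t a = ∑ j : Fin N, ω ^ (-(j : ℤ)) * Y t (j, a)) →
        ∀ t : ℝ, deriv ξ t
          = Υ.mulVec (-(ξ t) + ∑ k : Fin N, ω ^ (k : ℕ) • ((W k t).mulVec (ξ (t - τ k)))) := by
  intro q ω hω ξ hξ t
  haveI : NeZero N := ⟨by omega⟩
  have hω0 : ω ≠ 0 := by rw [hω]; exact Complex.exp_ne_zero _
  have hωN : ω ^ N = 1 := by
    rw [hω, ← Complex.exp_nat_mul]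
    have hNne : (N : ℂ) ≠ 0 := Nat.cast_ne_zero.mpr (by omega)
    rw [show (N : ℂ) * (2 * (Real.pi : ℂ) * Complex.I * ((q : ℕ) : ℂ) / (N : ℂ))
        = (((q : ℕ) : ℤ) : ℂ) * (2 * (Real.pi : ℂ) * Complex.I) by
      push_cast; field_simp]
    exact Complex.exp_int_mul_two_pi_mul_I ((q : ℕ) : ℤ)
  set v : Fin N → ℂ := fun j => ω ^ (-(j : ℤ)) with hv
  -- derivative of ξ
  have hxi : ξ = fun s => fun a => ∑ j : Fin N, v j * Y s (j, a) :=
    funext fun s => funext fun a => hξ s a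
  have hder : HasDerivAt ξ (fun a => ∑ j : Fin N, v j * deriv Y t (j, a)) t := by
    rw [hxi]
    refine hasDerivAt_pi.mpr fun a => ?_
    exact HasDerivAt.fun_sum fun j _ =>
      (hasDerivAt_pi.mp (hYdiff t).hasDerivAt (j, a)).const_mul (v j)
  rw [hder.deriv]
  funext a
  -- expand the RHS using linearity of mulVec
  have hrhs : Υ *ᵥ (-(ξ t) + ∑ k : Fin N, ω ^ (k : ℕ) • ((W k t) *ᵥ (ξ (t - τ k))))
      = -(Υ *ᵥ ξ t) + ∑ k : Fin N, ω ^ (k : ℕ) • (Υ *ᵥ ((W k t) *ᵥ (ξ (t - τ k)))) := by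
    rw [← Matrix.mulVecLin_apply]
    rw [map_add, map_neg, map_sum]
    simp only [Matrix.mulVecLin_apply, LinearMap.map_smul]
  rw [hrhs]
  -- expand the LHS
  rw [hY t]
  simp only [Pi.add_apply, Pi.neg_apply, Finset.sum_apply, mul_add, mul_neg]
  rw [Finset.sum_add_distrib, Finset.sum_neg_distrib]
  congr 1
  · -- identity block
    rw [kron_proj, Matrix.vecMul_one]
    simp only [neg_inj]
    simp only [Matrix.mulVec, dotProduct]
    refine Finset.sum_congr rfl fun b _ => ?_
    rw [hξ t b]
  · -- coupling blocks
    simp only [Finset.mul_sum]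
    rw [Finset.sum_comm]
    refine Finset.sum_congr rfl fun k _ => ?_
    have : ∑ j : Fin N, v j * (((C ^ (k : ℕ)) ⊗ₖ (Υ * W k t)) *ᵥ Y (t - τ k)) (j, a)
        = ∑ b : Fin p, (Υ * W k t) a b * ∑ j' : Fin N,
            ((v ᵥ* (C ^ (k : ℕ))) j') * Y (t - τ k) (j', b) :=
      kron_proj _ _ _ _ _
    rw [this, mode_vecMul_shift_pow hN C hC ω hω0 hωN k]
    simp only [Pi.smul_apply, smul_eq_mul, Matrix.mulVec_mulVec, Matrix.mulVec, dotProduct,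
      Finset.mul_sum]
    refine Finset.sum_congr rfl fun b _ => ?_
    rw [hξ (t - τ k) b]
    simp only [Finset.mul_sum]
    refine Finset.sum_congr rfl fun j' _ => by ring
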